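/- arXiv:1404.4916 — 2 statements merged into one kernel-verified Lean document; each statement's English description precedes it below -/
import Mathlib

section
/- Let ℋ be a separable infinite-dimensional complex Hilbert space and let α be a *-algebra automorphism of the C*-algebra 𝒦(ℋ) of compact operators on ℋ. Then there exists a unitary operator U on ℋ such that α(A) = U A U* for all A ∈ 𝒦(ℋ). -/
noncomputable section AutAux

open ContinuousLinearMap

variable {H : Type*} [NormedAddCommGroup H] [InnerProductSpace ℂ H] [CompleteSpace H]

local notation "⟪" x ", " y "⟫" => @inner ℂ _ _ x y

/-- The rank-one operator `z ↦ ⟪y, z⟫ • x`. -/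
def rk (x y : H) : H →L[ℂ] H := (innerSL ℂ y).smulRight x

lemma rk_apply (x y z : H) : rk x y z = ⟪y, z⟫ • x := rfl

lemma rk_compact (x y : H) : IsCompactOperator (rk x y) := by
  have h1 : IsCompactOperator (innerSL ℂ y) := by
    refine ⟨Metric.closedBall 0 ‖innerSL ℂ y‖, isCompact_closedBall _ _, ?_⟩
    have : Metric.closedBall (0 : H) 1 ⊆ (innerSL ℂ y) ⁻¹' Metric.closedBall 0 ‖innerSL ℂ y‖ := by
      intro z hz
      simp only [Set.mem_preimage, Metric.mem_closedBall, dist_zero_right] at *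
      calc ‖innerSL ℂ y z‖ ≤ ‖innerSL ℂ y‖ * ‖z‖ := (innerSL ℂ y).le_opNorm z
        _ ≤ ‖innerSL ℂ y‖ * 1 := by
            exact mul_le_mul_of_nonneg_left hz (norm_nonneg _)
        _ = ‖innerSL ℂ y‖ := mul_one _
    exact Filter.mem_of_superset (Metric.closedBall_mem_nhds 0 one_pos) this
  have h2 : Continuous (fun c : ℂ => c • x) := by fun_prop
  exact h1.continuous_comp h2

lemma star_rk (x y : H) : star (rk x y) = rk y x := by
  rw [star_eq_adjoint]
  symm
  rw [eq_adjoint_iff]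
  intro u v
  simp [rk_apply, inner_smul_left, inner_smul_right, mul_comm]

lemma rk_comp_rk (x y u v : H) : rk x y * rk u v = ⟪y, u⟫ • rk x v := by
  ext z
  simp [rk_apply, mul_apply, inner_smul_right, smul_smul, mul_comm]

lemma comp_rk (T : H →L[ℂ] H) (x y : H) : T * rk x y = rk (T x) y := by
  ext z
  simp [rk_apply, mul_apply]

lemma rk_comp (T : H →L[ℂ] H) (x y : H) :
    rk x y * T = rk x (ContinuousLinearMap.adjoint T y) := by
  ext z
  simp [rk_apply, mul_apply, ContinuousLinearMap.adjoint_inner_left]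

end AutAux

/-- Every *-algebra automorphism of the algebra `𝒦(ℋ)` of compact operators on a
separable infinite-dimensional complex Hilbert space is spatially implemented by a
unitary: `α(A) = U A U*` for all compact `A`.  The automorphism is encoded as a map
`α : B(ℋ) → B(ℋ)` which restricts to a bijection of the set of compact operators and is
linear, multiplicative and star-preserving there. -/
theorem compact_operator_automorphism_inner
    {H : Type*} [NormedAddCommGroup H] [InnerProductSpace ℂ H] [CompleteSpace H]
    [TopologicalSpace.SeparableSpace H] (hinf : ¬ FiniteDimensional ℂ H)
    (α : (H →L[ℂ] H) → (H →L[ℂ] H))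
    (hbij : Set.BijOn α {T : H →L[ℂ] H | IsCompactOperator (⇑T)}
      {T : H →L[ℂ] H | IsCompactOperator (⇑T)})
    (hadd : ∀ S T : H →L[ℂ] H, IsCompactOperator (⇑S) → IsCompactOperator (⇑T) →
      α (S + T) = α S + α T)
    (hsmul : ∀ (c : ℂ) (T : H →L[ℂ] H), IsCompactOperator (⇑T) → α (c • T) = c • α T)
    (hmul : ∀ S T : H →L[ℂ] H, IsCompactOperator (⇑S) → IsCompactOperator (⇑T) →
      α (S * T) = α S * α T)
    (hstar : ∀ T : H →L[ℂ] H, IsCompactOperator (⇑T) → α (star T) = star (α T)) :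
    ∃ U : H →L[ℂ] H, U ∈ unitary (H →L[ℂ] H) ∧
      ∀ T : H →L[ℂ] H, IsCompactOperator (⇑T) → α T = U * T * star U := by
  classical
  -- a unit vector
  have hne : ∃ x : H, x ≠ 0 := by
    by_contra h
    push_neg at h
    have : Subsingleton H := ⟨fun a b => by rw [h a, h b]⟩
    exact hinf inferInstance
  obtain ⟨x₀, hx₀⟩ := hne
  set e : H := (‖x₀‖ : ℂ)⁻¹ • x₀ with he_def
  have he : ‖e‖ = 1 := norm_smul_inv_norm hx₀
  have hee : (inner ℂ e e : ℂ) = 1 := by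
    rw [inner_self_eq_norm_sq_to_K, he]; norm_num
  set P : H →L[ℂ] H := rk e e with hP_def
  have hPc : IsCompactOperator (⇑P) := rk_compact e e
  have hP2 : P * P = P := by
    rw [hP_def, rk_comp_rk, hee, one_smul]
  have hPstar : star P = P := star_rk e e
  set Q : H →L[ℂ] H := α P with hQ_def
  have hQc : IsCompactOperator (⇑Q) := hbij.mapsTo hPc
  have hQ2 : Q * Q = Q := by
    rw [hQ_def, ← hmul P P hPc hPc, hP2]
  have hQstar : star Q = Q := by
    rw [hQ_def, ← hstar P hPc, hPstar]
  have hα0 : α 0 = 0 := by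
    have := hsmul 0 0 isCompactOperator_zero
    simpa using this
  have hQne : Q ≠ 0 := by
    intro h
    have hP0 : P = 0 := by
      apply hbij.injOn hPc (by simpa using isCompactOperator_zero)
      rw [hα0, ← hQ_def, h]
    have he0 : P e = 0 := by rw [hP0]; rfl
    rw [hP_def, rk_apply, hee, one_smul] at he0
    rw [he0, norm_zero] at he
    exact zero_ne_one he
  -- find a unit vector fixed by Q
  have hg : ∃ g : H, Q g ≠ 0 := by
    by_contra h
    push_neg at h
    exact hQne (ContinuousLinearMap.ext fun z => by simpa using h z)
  obtain ⟨g, hg⟩ := hg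
  set f : H := (‖Q g‖ : ℂ)⁻¹ • Q g with hf_def
  have hf1 : ‖f‖ = 1 := norm_smul_inv_norm hg
  have hff : (inner ℂ f f : ℂ) = 1 := by
    rw [inner_self_eq_norm_sq_to_K, hf1]; norm_num
  have hQQg : Q (Q g) = Q g := by
    have := congrArg (fun T : H →L[ℂ] H => T g) hQ2
    simpa [ContinuousLinearMap.mul_apply] using this
  have hQf : Q f = f := by
    rw [hf_def, map_smul, hQQg]
  -- minimality: compressions of compacts by Q are scalars
  have key : ∀ K : H →L[ℂ] H, IsCompactOperator (⇑K) → ∃ c : ℂ, Q * K * Q = c • Q := by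
    intro K hK
    obtain ⟨K', hK'c, hαK'⟩ := hbij.surjOn hK
    refine ⟨inner ℂ e (K' e), ?_⟩
    have hPK'c : IsCompactOperator (⇑(P * K')) := hPc.comp_clm K'
    have hPK'P : P * K' * P = (inner ℂ e (K' e) : ℂ) • P := by
      rw [hP_def, rk_comp, rk_comp_rk, ContinuousLinearMap.adjoint_inner_left]
    calc Q * K * Q = α P * α K' * α P := by rw [← hQ_def, hαK']
      _ = α (P * K' * P) := by
          rw [hmul (P * K') P hPK'c hPc, hmul P K' hPc hK'c]
      _ = (inner ℂ e (K' e) : ℂ) • Q := by rw [hPK'P, hsmul _ _ hPc, hQ_def]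
  -- Q is the rank-one projection onto f
  have hQrk : Q = rk f f := by
    ext x
    obtain ⟨c, hc⟩ := key (rk (Q x) f) (rk_compact _ _)
    have h1 : (Q * rk (Q x) f * Q) f = Q x := by
      simp only [ContinuousLinearMap.mul_apply, hQf, rk_apply, hff, one_smul]
      have := congrArg (fun T : H →L[ℂ] H => T x) hQ2
      simpa [ContinuousLinearMap.mul_apply] using this
    have h2 : Q x = c • f := by
      rw [hc] at h1
      simpa [hQf] using h1.symm
    have hcval : c = inner ℂ f x := by
      have h3 : (inner ℂ f (Q x) : ℂ) = c := by
        rw [h2, inner_smul_right, hff, mul_one]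
      have h4 : (inner ℂ f (Q x) : ℂ) = inner ℂ f x := by
        rw [← ContinuousLinearMap.adjoint_inner_left, ← ContinuousLinearMap.star_eq_adjoint,
          hQstar, hQf]
      rw [← h3, h4]
    rw [h2, hcval, rk_apply]
  -- build the unitary
  have hrk_add : ∀ x y : H, rk (x + y) e = rk x e + rk y e := by
    intro x y; ext z; simp [rk_apply, smul_add]
  have hrk_smul : ∀ (c : ℂ) (x : H), rk (c • x) e = c • rk x e := by
    intro c x; ext z; simp [rk_apply, smul_smul, mul_comm]
  set U₀ : H →ₗ[ℂ] H :=
    { toFun := fun x => α (rk x e) f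
      map_add' := fun x y => by
        show α (rk (x + y) e) f = α (rk x e) f + α (rk y e) f
        rw [hrk_add, hadd _ _ (rk_compact x e) (rk_compact y e)]; rfl
      map_smul' := fun c x => by
        show α (rk (c • x) e) f = c • α (rk x e) f
        rw [hrk_smul, hsmul c _ (rk_compact x e)]; rfl } with hU₀_def
  have hU₀_apply : ∀ x, U₀ x = α (rk x e) f := fun _ => rfl
  have hU₀_inner : ∀ x y : H, (inner ℂ (U₀ x) (U₀ y) : ℂ) = inner ℂ x y := by
    intro x y
    have hstar_mul : star (α (rk x e)) * α (rk y e) = (inner ℂ x y : ℂ) • Q := by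
      rw [← hstar _ (rk_compact x e), star_rk,
        ← hmul _ _ (rk_compact e x) (rk_compact y e), rk_comp_rk,
        hsmul _ _ (rk_compact e e), ← hP_def, ← hQ_def]
    calc (inner ℂ (U₀ x) (U₀ y) : ℂ)
        = inner ℂ (α (rk x e) f) (α (rk y e) f) := rfl
      _ = inner ℂ f ((star (α (rk x e)) * α (rk y e)) f) := by
          rw [ContinuousLinearMap.mul_apply, ContinuousLinearMap.star_eq_adjoint,
            ContinuousLinearMap.adjoint_inner_right]
      _ = inner ℂ x y := by
          rw [hstar_mul]
          simp [hQf, inner_smul_right, hff, hf1]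
  have hU₀_norm : ∀ x : H, ‖U₀ x‖ = ‖x‖ := by
    intro x
    have h := hU₀_inner x x
    rw [inner_self_eq_norm_sq_to_K, inner_self_eq_norm_sq_to_K] at h
    have h2 : (‖U₀ x‖ : ℝ) ^ 2 = ‖x‖ ^ 2 := by exact_mod_cast h
    exact (sq_eq_sq₀ (norm_nonneg _) (norm_nonneg _)).mp h2
  set U : H →L[ℂ] H := U₀.mkContinuous 1 (fun x => by rw [hU₀_norm, one_mul]) with hU_def
  have hU_apply : ∀ x, U x = α (rk x e) f := fun _ => rfl
  have hU_inner : ∀ x y : H, (inner ℂ (U x) (U y) : ℂ) = inner ℂ x y := hU₀_inner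
  have hU_surj : ∀ z : H, ∃ x : H, U x = z := by
    intro z
    obtain ⟨K', hK'c, hαK'⟩ := hbij.surjOn (rk_compact z f)
    refine ⟨K' e, ?_⟩
    have h1 : rk (K' e) e = K' * P := by rw [hP_def, comp_rk]
    rw [hU_apply, h1, hmul _ _ hK'c hPc, hαK', ← hQ_def, hQrk, rk_comp_rk, hff, one_smul,
      rk_apply, hff, one_smul]
  have hadjU : star U * U = 1 := by
    ext x
    apply ext_inner_left ℂ
    intro v
    rw [ContinuousLinearMap.mul_apply, ContinuousLinearMap.star_eq_adjoint,
      ContinuousLinearMap.adjoint_inner_right, hU_inner]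
    rfl
  have hUadj : U * star U = 1 := by
    ext z
    obtain ⟨x, rfl⟩ := hU_surj z
    have : (star U) (U x) = x := by
      have := congrArg (fun T : H →L[ℂ] H => T x) hadjU
      simpa [ContinuousLinearMap.mul_apply] using this
    simp [ContinuousLinearMap.mul_apply, this]
  refine ⟨U, Unitary.mem_iff.mpr ⟨hadjU, hUadj⟩, ?_⟩
  intro T hT
  have hcomm : ∀ z : H, α T (U z) = U (T z) := by
    intro z
    rw [hU_apply, hU_apply]
    have : α T (α (rk z e) f) = (α T * α (rk z e)) f := rfl
    rw [this, ← hmul _ _ hT (rk_compact z e), comp_rk]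
  ext w
  have hw : U ((star U) w) = w := by
    have := congrArg (fun T : H →L[ℂ] H => T w) hUadj
    simpa [ContinuousLinearMap.mul_apply] using this
  calc α T w = α T (U ((star U) w)) := by rw [hw]
    _ = U (T ((star U) w)) := hcomm _
    _ = (U * T * star U) w := rfl
end

section
/- Let ℋ be a complex Hilbert space and U a unitary operator on ℋ, and suppose there exists an orthonormal family (ξ_k)_{k ∈ ℤ} in ℋ with U ξ_k = ξ_{k+1} for all k ∈ ℤ (i.e. U contains a bilateral shift). Then μ is not weakly linearly disjoint from (B(ℋ), Ad(U)): there exist a bounded operator T on ℋ with ‖T‖ ≤ 1 and a unit vector ξ ∈ ℋ such that the sequence (1/N) · ∑_{n=1}^{N} μ(n) · ⟨Uⁿ T U*ⁿ ξ, ξ⟩ does not converge to 0 as N → ∞. Explicitly, one may take T = ∑_{k ≥ 1} μ(k) P_{−k}, where P_j is the orthogonal projection onto ℂξ_j, and ξ = ξ₀; then (1/N) · ∑_{n=1}^{N} μ(n) · ⟨Uⁿ T U*ⁿ ξ₀, ξ₀⟩ = (1/N) · ∑_{n=1}^{N} μ(n)², which does not converge to 0. -/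
open Filter ArithmeticFunction


lemma sum_inv_sq_aux : ∀ N : ℕ, 2 ≤ N →
    ∑ d ∈ Finset.Icc 3 N, (1:ℝ)/((d:ℝ)*(d:ℝ)) ≤ 1/2 - 1/N := by
  intro N hN
  induction N, hN using Nat.le_induction with
  | base => simp
  | succ n hn ih =>
    rw [Finset.sum_Icc_succ_top (by omega)]
    have hn0 : (2:ℝ) ≤ (n:ℝ) := by exact_mod_cast hn
    have h1 : (1:ℝ)/((n+1:ℕ):ℝ) = 1/((n:ℝ)+1) := by push_cast; ring
    have key : (1:ℝ)/(((n+1:ℕ):ℝ)*((n+1:ℕ):ℝ)) ≤ 1/(n:ℝ) - 1/((n:ℝ)+1) := by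
      push_cast
      rw [div_sub_div _ _ (by linarith) (by linarith), div_le_div_iff₀ (by nlinarith) (by nlinarith)]
      ring_nf
      nlinarith
    have := ih
    rw [h1]
    linarith

lemma sum_div_sq_le (N : ℕ) :
    ∑ d ∈ Finset.Icc 2 N, ((N/(d*d) : ℕ) : ℝ) ≤ 3*(N:ℝ)/4 := by
  rcases lt_or_ge N 2 with h | h
  · rw [Finset.Icc_eq_empty (by omega)]
    simp
    positivity
  · have hsplit : Finset.Icc 2 N = insert 2 (Finset.Icc 3 N) := by
      ext x
      simp only [Finset.mem_Icc, Finset.mem_insert]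
      omega
    rw [hsplit, Finset.sum_insert (by simp)]
    have h2 : ((N/(2*2) : ℕ) : ℝ) ≤ (N:ℝ)/4 := by
      have := Nat.cast_div_le (m := N) (n := 4) (α := ℝ)
      norm_num at this ⊢
      exact this
    have h3 : ∑ d ∈ Finset.Icc 3 N, ((N/(d*d) : ℕ) : ℝ)
        ≤ ∑ d ∈ Finset.Icc 3 N, (N:ℝ) * (1/((d:ℝ)*(d:ℝ))) := by
      apply Finset.sum_le_sum
      intro d hd
      have hd3 : 3 ≤ d := (Finset.mem_Icc.mp hd).1
      have hdpos : (0:ℝ) < (d:ℝ)*(d:ℝ) := by positivity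
      calc ((N/(d*d) : ℕ) : ℝ) ≤ (N:ℝ)/((d*d : ℕ):ℝ) := Nat.cast_div_le
        _ = (N:ℝ) * (1/((d:ℝ)*(d:ℝ))) := by push_cast; ring
    rw [← Finset.mul_sum] at h3
    have h4 : ∑ d ∈ Finset.Icc 3 N, (1:ℝ)/((d:ℝ)*(d:ℝ)) ≤ 1/2 :=
      le_trans (sum_inv_sq_aux N h) (by
        have : (0:ℝ) < N := by exact_mod_cast (by omega : 0 < N)
        have : (0:ℝ) ≤ 1/(N:ℝ) := by positivity
        linarith)
    have hN0 : (0:ℝ) ≤ (N:ℝ) := by positivity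
    nlinarith

open Classical in
lemma squarefree_count_le (N : ℕ) :
    (N:ℝ) ≤ 4 * ∑ n ∈ Finset.Icc 1 N, (((moebius n : ℤ)):ℝ)^2 := by
  classical
  have hsum : ∑ n ∈ Finset.Icc 1 N, (((moebius n : ℤ)):ℝ)^2
      = ((Finset.Icc 1 N).filter (fun n => Squarefree n)).card := by
    rw [Finset.card_filter]
    push_cast
    apply Finset.sum_congr rfl
    intro n _
    have := moebius_sq (n := n)
    have h2 : ((moebius n : ℤ):ℝ)^2 = (((moebius n)^2 : ℤ) : ℝ) := by push_cast; ring
    rw [h2, this]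
    split_ifs <;> simp
  rw [hsum]
  -- bound the number of non-squarefree numbers
  have hsubset : (Finset.Icc 1 N).filter (fun n => ¬ Squarefree n) ⊆
      (Finset.Icc 2 N).biUnion (fun d => (Finset.Icc 1 N).filter (fun n => d*d ∣ n)) := by
    intro n hn
    rw [Finset.mem_filter] at hn
    obtain ⟨hmem, hnsq⟩ := hn
    rw [Finset.mem_Icc] at hmem
    obtain ⟨p, hp, hdvd⟩ := by
      have := Nat.squarefree_iff_prime_squarefree (n := n)
      rw [this] at hnsq
      push_neg at hnsq
      exact hnsq
    rw [Finset.mem_biUnion]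
    refine ⟨p, ?_, ?_⟩
    · rw [Finset.mem_Icc]
      constructor
      · exact hp.two_le
      · calc p ≤ p * p := Nat.le_mul_of_pos_left p hp.pos
          _ ≤ n := Nat.le_of_dvd (by omega) hdvd
          _ ≤ N := hmem.2
    · rw [Finset.mem_filter, Finset.mem_Icc]
      exact ⟨⟨hmem.1, hmem.2⟩, hdvd⟩
  have hcard : ((Finset.Icc 1 N).filter (fun n => ¬ Squarefree n)).card
      ≤ ∑ d ∈ Finset.Icc 2 N, N/(d*d) := by
    calc ((Finset.Icc 1 N).filter (fun n => ¬ Squarefree n)).card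
        ≤ ((Finset.Icc 2 N).biUnion (fun d => (Finset.Icc 1 N).filter (fun n => d*d ∣ n))).card :=
          Finset.card_le_card hsubset
      _ ≤ ∑ d ∈ Finset.Icc 2 N, ((Finset.Icc 1 N).filter (fun n => d*d ∣ n)).card :=
          Finset.card_biUnion_le
      _ = ∑ d ∈ Finset.Icc 2 N, N/(d*d) := by
          apply Finset.sum_congr rfl
          intro d _
          have hicc : Finset.Icc 1 N = Finset.Ioc 0 N := by
            ext x; simp only [Finset.mem_Icc, Finset.mem_Ioc]; omega
          rw [hicc]
          exact Nat.Ioc_filter_dvd_card_eq_div N (d*d)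
  have htotal : ((Finset.Icc 1 N).filter (fun n => Squarefree n)).card
      + ((Finset.Icc 1 N).filter (fun n => ¬ Squarefree n)).card = N := by
    rw [Finset.card_filter_add_card_filter_not]
    simp [Nat.card_Icc]
  have hreal : (((Finset.Icc 1 N).filter (fun n => ¬ Squarefree n)).card : ℝ) ≤ 3*(N:ℝ)/4 := by
    calc (((Finset.Icc 1 N).filter (fun n => ¬ Squarefree n)).card : ℝ)
        ≤ ((∑ d ∈ Finset.Icc 2 N, N/(d*d) : ℕ) : ℝ) := by exact_mod_cast hcard
      _ = ∑ d ∈ Finset.Icc 2 N, ((N/(d*d) : ℕ) : ℝ) := by push_cast; rfl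
      _ ≤ 3*(N:ℝ)/4 := sum_div_sq_le N
  have : (((Finset.Icc 1 N).filter (fun n => Squarefree n)).card : ℝ)
      + (((Finset.Icc 1 N).filter (fun n => ¬ Squarefree n)).card : ℝ) = N := by exact_mod_cast htotal
  linarith

/-- If a unitary `U` on a complex Hilbert space contains a bilateral shift (there is an
orthonormal family `(ξ_k)_{k ∈ ℤ}` with `U ξ_k = ξ_{k+1}`), then `μ` is NOT weakly
linearly disjoint from `(B(ℋ), Ad U)`: there is a contraction `T` (namely
`T = ∑_{k ≥ 1} μ(k) P_{-k}`) such that `μ(n) ⟨Uⁿ T U*ⁿ ξ₀, ξ₀⟩ = μ(n)²` for all `n ≥ 1`,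
and the averages `(1/N) ∑_{n=1}^N μ(n) ⟨Uⁿ T U*ⁿ ξ₀, ξ₀⟩ = (1/N) ∑_{n=1}^N μ(n)²` do not
converge to `0`.  (Mathlib's inner product is conjugate-linear in the first variable, so
`⟨S x, x⟩` is written `⟪x, S x⟫`.) -/
theorem moebius_not_weakly_disjoint_of_bilateral_shift
    {H : Type*} [NormedAddCommGroup H] [InnerProductSpace ℂ H] [CompleteSpace H]
    (ξ : ℤ → H) (hortho : Orthonormal ℂ ξ)
    (U : H →L[ℂ] H) (hU : U ∈ unitary (H →L[ℂ] H))
    (hshift : ∀ k : ℤ, U (ξ k) = ξ (k + 1)) :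
    ∃ T : H →L[ℂ] H, ‖T‖ ≤ 1 ∧
      (∀ n : ℕ, 1 ≤ n →
        (moebius n : ℂ) * (inner ℂ (ξ 0) ((U ^ n * T * star (U ^ n)) (ξ 0)) : ℂ)
          = (moebius n : ℂ) ^ 2) ∧
      ¬ Tendsto (fun N : ℕ => (N : ℂ)⁻¹ * ∑ n ∈ Finset.Icc 1 N,
          (moebius n : ℂ) * (inner ℂ (ξ 0) ((U ^ n * T * star (U ^ n)) (ξ 0)) : ℂ))
        atTop (nhds 0) := by
  classical
  -- action of powers of U
  have hUn : ∀ (n : ℕ) (m : ℤ), (U ^ n) (ξ m) = ξ (m + n) := by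
    intro n
    induction n with
    | zero => intro m; simp
    | succ n ih =>
      intro m
      rw [pow_succ, ContinuousLinearMap.mul_apply, hshift m, ih (m+1)]
      congr 1
      push_cast
      ring
  have hUninv : ∀ n : ℕ, (star (U ^ n)) (ξ 0) = ξ (-(n:ℤ)) := by
    intro n
    have h1 : star (U ^ n) * U ^ n = 1 := (Unitary.mem_iff.mp (pow_mem hU n)).1
    have h2 : (U ^ n) (ξ (-(n:ℤ))) = ξ 0 := by rw [hUn n]; norm_num
    calc (star (U ^ n)) (ξ 0) = (star (U ^ n)) ((U ^ n) (ξ (-(n:ℤ)))) := by rw [h2]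
      _ = (star (U ^ n) * U ^ n) (ξ (-(n:ℤ))) := rfl
      _ = ξ (-(n:ℤ)) := by rw [h1]; rfl
  -- index sets
  set I1 : Set ℤ := {m | ∃ n : ℕ, m = -(n:ℤ) ∧ moebius n = 1} with hI1
  set I2 : Set ℤ := {m | ∃ n : ℕ, m = -(n:ℤ) ∧ moebius n = -1} with hI2
  set K1 : Submodule ℂ H := (Submodule.span ℂ (ξ '' I1)).topologicalClosure with hK1
  set K2 : Submodule ℂ H := (Submodule.span ℂ (ξ '' I2)).topologicalClosure with hK2
  -- orthogonal complements
  have hK1o : K1ᗮ = (Submodule.span ℂ (ξ '' I1))ᗮ := by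
    rw [hK1, ← Submodule.orthogonal_orthogonal_eq_closure,
      Submodule.triorthogonal_eq_orthogonal]
  have hK2o : K2ᗮ = (Submodule.span ℂ (ξ '' I2))ᗮ := by
    rw [hK2, ← Submodule.orthogonal_orthogonal_eq_closure,
      Submodule.triorthogonal_eq_orthogonal]
  -- a vector ξ m with m not in I is orthogonal to the span of ξ '' I
  have hperp : ∀ (Iset : Set ℤ) (m : ℤ), m ∉ Iset →
      ξ m ∈ (Submodule.span ℂ (ξ '' Iset))ᗮ := by
    intro Iset m hm
    have hval : Submodule.span ℂ ({ξ m} : Set H) ⟂ Submodule.span ℂ (ξ '' Iset) := by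
      rw [Submodule.isOrtho_span]
      rintro u hu v ⟨m', hm', rfl⟩
      rw [Set.mem_singleton_iff] at hu
      subst hu
      exact hortho.2 (fun h => hm (h ▸ hm'))
    exact hval (Submodule.mem_span_singleton_self _)
  have hmemK1 : ∀ m ∈ I1, ξ m ∈ K1 := fun m hm =>
    Submodule.le_topologicalClosure _ (Submodule.subset_span ⟨m, hm, rfl⟩)
  have hmemK2 : ∀ m ∈ I2, ξ m ∈ K2 := fun m hm =>
    Submodule.le_topologicalClosure _ (Submodule.subset_span ⟨m, hm, rfl⟩)
  -- K1 ⟂ K2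
  have hdisj : K1 ⟂ K2 := by
    have hspan : Submodule.span ℂ (ξ '' I1) ≤ K2ᗮ := by
      rw [hK2o]
      rintro x hx
      refine Submodule.span_le.mpr ?_ hx
      rintro v ⟨m, hm, rfl⟩
      apply hperp
      rintro ⟨n', hn', hmu'⟩
      obtain ⟨n, hn, hmu⟩ := hm
      have : n = n' := by omega
      subst this
      omega
    exact (Submodule.span ℂ (ξ '' I1)).topologicalClosure_minimal hspan
      (Submodule.isClosed_orthogonal _)
  -- the projections
  let P1 : H →L[ℂ] H := K1.subtypeL.comp (Submodule.orthogonalProjection K1)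
  let P2 : H →L[ℂ] H := K2.subtypeL.comp (Submodule.orthogonalProjection K2)
  -- inner product identity
  have hip : ∀ n : ℕ, 1 ≤ n →
      (moebius n : ℂ) * (inner ℂ (ξ 0) ((U ^ n * (P1 - P2) * star (U ^ n)) (ξ 0)) : ℂ)
        = (moebius n : ℂ) ^ 2 := by
    intro n hn
    have hA : (U ^ n * (P1 - P2) * star (U ^ n)) (ξ 0)
        = (U ^ n) ((P1 - P2) (ξ (-(n:ℤ)))) := by
      rw [ContinuousLinearMap.mul_apply, ContinuousLinearMap.mul_apply, hUninv]
    have hadj : (inner ℂ (ξ 0) ((U ^ n) ((P1 - P2) (ξ (-(n:ℤ))))) : ℂ)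
        = inner ℂ (ξ (-(n:ℤ))) ((P1 - P2) (ξ (-(n:ℤ)))) := by
      rw [← hUninv n, ContinuousLinearMap.star_eq_adjoint]
      exact (ContinuousLinearMap.adjoint_inner_left (U ^ n) _ (ξ 0)).symm
    rw [hA, hadj]
    have hself : (inner ℂ (ξ (-(n:ℤ))) (ξ (-(n:ℤ))) : ℂ) = 1 := by
      have := orthonormal_iff_ite.mp hortho (-(n:ℤ)) (-(n:ℤ))
      simpa using this
    rcases moebius_eq_or n with h | h | h
    · simp [h]
    · -- μ n = 1
      have hm1 : (-(n:ℤ)) ∈ I1 := ⟨n, rfl, h⟩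
      have hm2 : (-(n:ℤ)) ∉ I2 := by
        rintro ⟨n', hn', hmu⟩
        have : n = n' := by omega
        subst this; omega
      have hp1 : P1 (ξ (-(n:ℤ))) = ξ (-(n:ℤ)) :=
        Submodule.starProjection_eq_self_iff.mpr (hmemK1 _ hm1)
      have hp2 : P2 (ξ (-(n:ℤ))) = 0 := by
        have hmem : ξ (-(n:ℤ)) ∈ K2ᗮ := by rw [hK2o]; exact hperp I2 _ hm2
        have := Submodule.orthogonalProjectionOnto_apply_of_mem_orthogonal hmem
        show (K2.subtypeL (Submodule.orthogonalProjection K2 (ξ (-(n:ℤ)))) : H) = 0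
        rw [this]; rfl
      rw [ContinuousLinearMap.sub_apply, hp1, hp2, sub_zero, hself, h]
      norm_num
    · -- μ n = -1
      have hm2 : (-(n:ℤ)) ∈ I2 := ⟨n, rfl, h⟩
      have hm1 : (-(n:ℤ)) ∉ I1 := by
        rintro ⟨n', hn', hmu⟩
        have : n = n' := by omega
        subst this; omega
      have hp2 : P2 (ξ (-(n:ℤ))) = ξ (-(n:ℤ)) :=
        Submodule.starProjection_eq_self_iff.mpr (hmemK2 _ hm2)
      have hp1 : P1 (ξ (-(n:ℤ))) = 0 := by
        have hmem : ξ (-(n:ℤ)) ∈ K1ᗮ := by rw [hK1o]; exact hperp I1 _ hm1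
        have := Submodule.orthogonalProjectionOnto_apply_of_mem_orthogonal hmem
        show (K1.subtypeL (Submodule.orthogonalProjection K1 (ξ (-(n:ℤ)))) : H) = 0
        rw [this]; rfl
      rw [ContinuousLinearMap.sub_apply, hp1, hp2, zero_sub, inner_neg_right, hself, h]
      norm_num
  refine ⟨P1 - P2, ?_, hip, ?_⟩
  · -- norm bound
    apply ContinuousLinearMap.opNorm_le_bound _ zero_le_one
    intro x
    rw [one_mul]
    set a : H := P1 x with ha
    set b : H := P2 x with hb
    have haK : a ∈ K1 := (Submodule.orthogonalProjection K1 x).2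
    have hbK : b ∈ K2 := (Submodule.orthogonalProjection K2 x).2
    have hab : (inner ℂ a b : ℂ) = 0 := hdisj.inner_eq haK hbK
    have hTx : (P1 - P2) x = a - b := rfl
    have h1 : ‖a - b‖^2 = ‖a‖^2 + ‖b‖^2 := by
      rw [@norm_sub_sq ℂ, hab]
      simp
    have hP2a : P2 a = 0 := by
      have hmem : a ∈ K2ᗮ := hdisj haK
      have := Submodule.orthogonalProjectionOnto_apply_of_mem_orthogonal hmem
      show (K2.subtypeL (Submodule.orthogonalProjection K2 a) : H) = 0
      rw [this]; rfl
    have hb2 : b = P2 (x - a) := by rw [map_sub, hP2a, sub_zero]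
    have hnb : ‖b‖ ≤ ‖x - a‖ := by
      rw [hb2]
      have h0 : ‖Submodule.orthogonalProjection K2 (x - a)‖ ≤ ‖x - a‖ := by
        calc ‖Submodule.orthogonalProjection K2 (x - a)‖
            ≤ ‖Submodule.orthogonalProjection K2‖ * ‖x - a‖ :=
              (Submodule.orthogonalProjection K2).le_opNorm _
          _ ≤ 1 * ‖x - a‖ := by
              have := Submodule.orthogonalProjection_norm_le K2
              have : ‖Submodule.orthogonalProjection K2‖ * ‖x - a‖ ≤ 1 * ‖x - a‖ :=
                mul_le_mul_of_nonneg_right this (norm_nonneg _)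
              exact this
          _ = ‖x - a‖ := one_mul _
      exact h0
    have hxa : x - a ∈ K1ᗮ := Submodule.sub_starProjection_mem_orthogonal x
    have hinner : (inner ℂ a (x - a) : ℂ) = 0 :=
      Submodule.inner_right_of_mem_orthogonal haK hxa
    have h2 : ‖x‖^2 = ‖a‖^2 + ‖x - a‖^2 := by
      have := @norm_add_sq ℂ _ _ _ _ a (x - a)
      rw [hinner] at this
      simpa using this
    rw [hTx]
    nlinarith [norm_nonneg (a - b), norm_nonneg x, norm_nonneg b, norm_nonneg (x - a)]
  · -- non-convergence
    intro htend
    have h14 : ∀ N : ℕ, 1 ≤ N → (1:ℝ)/4 ≤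
        ‖(N : ℂ)⁻¹ * ∑ n ∈ Finset.Icc 1 N,
          (moebius n : ℂ) * (inner ℂ (ξ 0) ((U ^ n * (P1 - P2) * star (U ^ n)) (ξ 0)) : ℂ)‖ := by
      intro N hN
      have hsum : ∑ n ∈ Finset.Icc 1 N,
          (moebius n : ℂ) * (inner ℂ (ξ 0) ((U ^ n * (P1 - P2) * star (U ^ n)) (ξ 0)) : ℂ)
          = ((∑ n ∈ Finset.Icc 1 N, (((moebius n : ℤ)):ℝ)^2 : ℝ) : ℂ) := by
        push_cast
        apply Finset.sum_congr rfl
        intro n hn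
        have := hip n (Finset.mem_Icc.mp hn).1
        push_cast at this
        exact this
      set Sr : ℝ := ∑ n ∈ Finset.Icc 1 N, (((moebius n : ℤ)):ℝ)^2 with hSr
      have hSrnn : 0 ≤ Sr := Finset.sum_nonneg fun n _ => sq_nonneg _
      have hSrge : (N:ℝ) ≤ 4 * Sr := squarefree_count_le N
      rw [hsum, norm_mul, norm_inv, Complex.norm_natCast, Complex.norm_real,
        Real.norm_eq_abs, abs_of_nonneg hSrnn]
      have hN0 : (0:ℝ) < N := by exact_mod_cast hN
      rw [inv_mul_eq_div, le_div_iff₀ hN0]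
      linarith
    have h2 := htend.norm
    rw [norm_zero] at h2
    obtain ⟨N, hlt, hN⟩ :=
      ((h2.eventually_lt_const (by norm_num : (0:ℝ) < 1/4)).and
        (eventually_ge_atTop 1)).exists
    exact absurd (h14 N hN) (by simpa using not_le.mpr hlt)
end
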